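/- Let I be a one-to-one matching market instance in which every choice function is substitutable and consistent, and let S be its set of stable matchings ordered by ⪰. Then the lattice (S, ⪰) is distributive: for all μ₁, μ₂, μ₃ ∈ S, if a is a least upper bound of μ₂ and μ₃ in (S, ⪰), b is a greatest lower bound of μ₁ and a, c is a greatest lower bound of μ₁ and μ₂, d is a greatest lower bound of μ₁ and μ₃, and e is a least upper bound of c and d, then b = e. -/

import Mathlib

open Finset

/-- A choice function is substitutable if `a ∈ C S` implies `a ∈ C (T ∪ {a})`
for every `T ⊆ S`. -/
def Substitutable {α : Type*} [DecidableEq α] (C : Finset α → Finset α) : Prop :=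
  ∀ (S T : Finset α) (a : α), T ⊆ S → a ∈ C S → a ∈ C (insert a T)

/-- A choice function is consistent if `C S ⊆ T ⊆ S` implies `C T = C S`. -/
def Consistent {α : Type*} (C : Finset α → Finset α) : Prop :=
  ∀ (S T : Finset α), C S ⊆ T → T ⊆ S → C T = C S

/-- The set of workers matched to firm `f` in the matching `μ`. -/
def matchedW {F W : Type*} [DecidableEq F] [DecidableEq W]
    (μ : Finset (F × W)) (f : F) : Finset W :=
  (μ.filter fun p => p.1 = f).image Prod.snd

/-- The set of firms matched to worker `w` in the matching `μ`. -/
def matchedF {F W : Type*} [DecidableEq F] [DecidableEq W]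
    (μ : Finset (F × W)) (w : W) : Finset F :=
  (μ.filter fun p => p.2 = w).image Prod.fst

/-- A matching is stable if it is individually rational and has no blocking pair. -/
def IsStable {F W : Type*} [DecidableEq F] [DecidableEq W]
    (Cf : F → Finset W → Finset W) (Cw : W → Finset F → Finset F)
    (μ : Finset (F × W)) : Prop :=
  (∀ f, Cf f (matchedW μ f) = matchedW μ f) ∧
  (∀ w, Cw w (matchedF μ w) = matchedF μ w) ∧
  (∀ f w, (f, w) ∉ μ →
    ¬ (f ∈ Cw w (insert f (matchedF μ w)) ∧ w ∈ Cf f (insert w (matchedW μ f))))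

/-- The firm (partial) order on matchings: `μ ⪰ μ'` iff
`C_f(μ(f) ∪ μ'(f)) = μ(f)` for every firm `f`. -/
def FirmGE {F W : Type*} [DecidableEq F] [DecidableEq W]
    (Cf : F → Finset W → Finset W) (μ μ' : Finset (F × W)) : Prop :=
  ∀ f, Cf f (matchedW μ f ∪ matchedW μ' f) = matchedW μ f

/-- `ν` is a least upper bound of `μ` and `μ'` among stable matchings,
with respect to the firm order. -/
def IsStableLUB {F W : Type*} [DecidableEq F] [DecidableEq W]
    (Cf : F → Finset W → Finset W) (Cw : W → Finset F → Finset F)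
    (ν μ μ' : Finset (F × W)) : Prop :=
  IsStable Cf Cw ν ∧ FirmGE Cf ν μ ∧ FirmGE Cf ν μ' ∧
  ∀ l, IsStable Cf Cw l → FirmGE Cf l μ → FirmGE Cf l μ' → FirmGE Cf l ν

/-- `ν` is a greatest lower bound of `μ` and `μ'` among stable matchings,
with respect to the firm order. -/
def IsStableGLB {F W : Type*} [DecidableEq F] [DecidableEq W]
    (Cf : F → Finset W → Finset W) (Cw : W → Finset F → Finset F)
    (ν μ μ' : Finset (F × W)) : Prop :=
  IsStable Cf Cw ν ∧ FirmGE Cf μ ν ∧ FirmGE Cf μ' ν ∧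
  ∀ l, IsStable Cf Cw l → FirmGE Cf μ l → FirmGE Cf μ' l → FirmGE Cf ν l

set_option linter.unusedSectionVars false

namespace StableLattice

variable {F W : Type*} [DecidableEq F] [DecidableEq W]

lemma mem_matchedW {μ : Finset (F × W)} {f : F} {w : W} :
    w ∈ matchedW μ f ↔ (f, w) ∈ μ := by
  simp only [matchedW, mem_image, mem_filter]
  constructor
  · rintro ⟨⟨pf, pw⟩, ⟨hp, rfl⟩, rfl⟩; exact hp
  · intro h; exact ⟨(f, w), ⟨h, rfl⟩, rfl⟩

lemma mem_matchedF {μ : Finset (F × W)} {f : F} {w : W} :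
    f ∈ matchedF μ w ↔ (f, w) ∈ μ := by
  simp only [matchedF, mem_image, mem_filter]
  constructor
  · rintro ⟨⟨pf, pw⟩, ⟨hp, rfl⟩, rfl⟩; exact hp
  · intro h; exact ⟨(f, w), ⟨h, rfl⟩, rfl⟩

lemma ext_matchedW {μ ν : Finset (F × W)} (h : ∀ f, matchedW μ f = matchedW ν f) :
    μ = ν := by
  ext ⟨f, w⟩
  rw [← mem_matchedW, ← mem_matchedW, h]

lemma ext_matchedF {μ ν : Finset (F × W)} (h : ∀ w, matchedF μ w = matchedF ν w) :
    μ = ν := by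
  ext ⟨f, w⟩
  rw [← mem_matchedF, ← mem_matchedF, h]

lemma matchedW_union {μ ν : Finset (F × W)} {f : F} :
    matchedW (μ ∪ ν) f = matchedW μ f ∪ matchedW ν f := by
  simp [matchedW, filter_union, image_union]

lemma matchedF_union {μ ν : Finset (F × W)} {w : W} :
    matchedF (μ ∪ ν) w = matchedF μ w ∪ matchedF ν w := by
  simp [matchedF, filter_union, image_union]

lemma matchedW_subset {μ ν : Finset (F × W)} (h : μ ⊆ ν) {f : F} :
    matchedW μ f ⊆ matchedW ν f := by
  intro w hw
  exact mem_matchedW.2 (h (mem_matchedW.1 hw))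

lemma matchedF_subset {μ ν : Finset (F × W)} (h : μ ⊆ ν) {w : W} :
    matchedF μ w ⊆ matchedF ν w := by
  intro f hf
  exact mem_matchedF.2 (h (mem_matchedF.1 hf))

section Choice

variable {α : Type*} [DecidableEq α] {C : Finset α → Finset α}

lemma pathInd (hsub : ∀ S, C S ⊆ S) (hs : Substitutable C) (hc : Consistent C)
    (A B : Finset α) : C (C A ∪ B) = C (A ∪ B) := by
  have h1 : C (A ∪ B) ⊆ C A ∪ B := by
    intro x hx
    rcases mem_union.1 (hsub _ hx) with hA | hB
    · refine mem_union_left _ ?_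
      have := hs (A ∪ B) (A.erase x) x
        ((erase_subset _ _).trans subset_union_left) hx
      rwa [insert_erase hA] at this
    · exact mem_union_right _ hB
  exact hc (A ∪ B) (C A ∪ B) h1 (union_subset_union (hsub A) Subset.rfl)

lemma idemC (hsub : ∀ S, C S ⊆ S) (hc : Consistent C) (A : Finset α) :
    C (C A) = C A :=
  hc A (C A) Subset.rfl (hsub A)

lemma choice_ne (hc : Consistent C) {x : α} {S : Finset α}
    (hx : x ∈ S) (hax : C {x} = {x}) : (C S).Nonempty := by
  by_contra h
  rw [not_nonempty_iff_eq_empty] at h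
  have h2 := hc S {x} (by simp [h]) (by simpa using hx)
  rw [hax, h] at h2
  simp at h2

lemma sing_of {S : Finset α} {x : α} (hx : x ∈ S) (h : S.card ≤ 1) : S = {x} :=
  Finset.eq_singleton_iff_unique_mem.2
    ⟨hx, fun y hy => Finset.card_le_one.1 h y hy x hx⟩

end Choice

end StableLattice
namespace StableLattice

/-- A bundled one-to-one market with substitutable consistent choice functions. -/
structure Mkt (F W : Type*) [DecidableEq F] [DecidableEq W] where
  Cf : F → Finset W → Finset W
  Cw : W → Finset F → Finset F
  hfsub : ∀ f S, Cf f S ⊆ S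
  hwsub : ∀ w S, Cw w S ⊆ S
  hfs : ∀ f, Substitutable (Cf f)
  hfc : ∀ f, Consistent (Cf f)
  hws : ∀ w, Substitutable (Cw w)
  hwc : ∀ w, Consistent (Cw w)
  hone_f : ∀ f T, (Cf f T).card ≤ 1
  hone_w : ∀ w T, (Cw w T).card ≤ 1

variable {F W : Type*} [DecidableEq F] [DecidableEq W]

/-- Swap the two sides of a market. -/
def Mkt.swap (M : Mkt F W) : Mkt W F :=
  ⟨M.Cw, M.Cf, M.hwsub, M.hfsub, M.hws, M.hwc, M.hfs, M.hfc, M.hone_w, M.hone_f⟩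

/-- Swap a matching. -/
def mswap (μ : Finset (F × W)) : Finset (W × F) := μ.image Prod.swap

lemma mem_mswap {μ : Finset (F × W)} {w : W} {f : F} :
    (w, f) ∈ mswap μ ↔ (f, w) ∈ μ := by
  simp only [mswap, mem_image, Prod.exists]
  constructor
  · rintro ⟨x, y, hxy, h⟩
    obtain ⟨rfl, rfl⟩ : y = w ∧ x = f := by
      simpa [Prod.swap, Prod.ext_iff] using h
    exact hxy
  · intro h; exact ⟨f, w, h, rfl⟩

lemma mswap_mswap (μ : Finset (F × W)) : mswap (mswap μ) = μ := by
  ext ⟨f, w⟩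
  rw [mem_mswap, mem_mswap]

lemma matchedW_mswap {μ : Finset (F × W)} {w : W} :
    matchedW (mswap μ) w = matchedF μ w := by
  ext f
  rw [mem_matchedW, mem_mswap, mem_matchedF]

lemma matchedF_mswap {μ : Finset (F × W)} {f : F} :
    matchedF (mswap μ) f = matchedW μ f := by
  ext w
  rw [mem_matchedF, mem_mswap, mem_matchedW]

lemma isStable_mswap {M : Mkt F W} {μ : Finset (F × W)} (h : IsStable M.Cf M.Cw μ) :
    IsStable M.swap.Cf M.swap.Cw (mswap μ) := by
  obtain ⟨h1, h2, h3⟩ := h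
  refine ⟨fun w => ?_, fun f => ?_, fun w f hwf => ?_⟩
  · rw [matchedW_mswap]; exact h2 w
  · rw [matchedF_mswap]; exact h1 f
  · rw [mem_mswap] at hwf
    intro ⟨ha, hb⟩
    rw [matchedF_mswap] at ha
    rw [matchedW_mswap] at hb
    exact h3 f w hwf ⟨hb, ha⟩

/-- The worker-side order. -/
def WorkerGE (Cw : W → Finset F → Finset F) (μ μ' : Finset (F × W)) : Prop :=
  ∀ w, Cw w (matchedF μ w ∪ matchedF μ' w) = matchedF μ w

lemma firmGE_mswap {M : Mkt F W} {μ ν : Finset (F × W)} :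
    FirmGE M.swap.Cf (mswap μ) (mswap ν) ↔ WorkerGE M.Cw μ ν := by
  unfold FirmGE WorkerGE
  constructor
  · intro h w; have := h w; rwa [matchedW_mswap, matchedW_mswap] at this
  · intro h w; rw [matchedW_mswap, matchedW_mswap]; exact h w

lemma workerGE_mswap {M : Mkt F W} {μ ν : Finset (F × W)} :
    WorkerGE M.swap.Cw (mswap μ) (mswap ν) ↔ FirmGE M.Cf μ ν := by
  unfold FirmGE WorkerGE
  constructor
  · intro h f; have := h f; rwa [matchedF_mswap, matchedF_mswap] at this
  · intro h f; rw [matchedF_mswap, matchedF_mswap]; exact h f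

variable {M : Mkt F W}

lemma cardW (h : IsStable M.Cf M.Cw μ) (f : F) : (matchedW μ f).card ≤ 1 := by
  rw [← h.1 f]; exact M.hone_f f _

lemma cardF (h : IsStable M.Cf M.Cw μ) (w : W) : (matchedF μ w).card ≤ 1 := by
  rw [← h.2.1 w]; exact M.hone_w w _

/-- Key pointer lemma: if firm `f` is matched to `w` in `μ` but not `ν`, and `f`
chooses `w` out of its two partners, then `w` is matched in `ν` to some other firm,
and `w` chooses its `ν`-partner out of its two partners. -/
lemma key {μ ν : Finset (F × W)} {f : F} {w : W}
    (hμ : IsStable M.Cf M.Cw μ) (hν : IsStable M.Cf M.Cw ν)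
    (h1 : (f, w) ∈ μ) (h2 : (f, w) ∉ ν)
    (hch : w ∈ M.Cf f (matchedW μ f ∪ matchedW ν f)) :
    (matchedF ν w).Nonempty ∧ f ∉ matchedF ν w ∧
      M.Cw w (matchedF μ w ∪ matchedF ν w) = matchedF ν w := by
  have hμF : matchedF μ w = {f} := sing_of (mem_matchedF.2 h1) (cardF hμ w)
  have hax : M.Cw w {f} = {f} := by rw [← hμF]; exact hμ.2.1 w
  have hfW : w ∈ M.Cf f (insert w (matchedW ν f)) :=
    M.hfs f _ (matchedW ν f) w subset_union_right hch
  have hnotf : f ∉ M.Cw w (insert f (matchedF ν w)) :=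
    fun hf => hν.2.2 f w h2 ⟨hf, hfW⟩
  have hne : (matchedF ν w).Nonempty := by
    rcases (matchedF ν w).eq_empty_or_nonempty with he | h
    · exfalso; apply hnotf; rw [he]
      simpa using (by rw [hax]; exact mem_singleton_self f : f ∈ M.Cw w {f})
    · exact h
  obtain ⟨g, hg⟩ := hne
  have hνF : matchedF ν w = {g} := sing_of hg (cardF hν w)
  have hfg : f ∉ matchedF ν w := fun hf => h2 (mem_matchedF.1 hf)
  refine ⟨⟨g, hg⟩, hfg, ?_⟩
  rw [hμF, hνF]
  have hne2 : (M.Cw w ({f} ∪ {g})).Nonempty :=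
    choice_ne (M.hwc w) (by simp) hax
  obtain ⟨x, hx⟩ := hne2
  have hsing : M.Cw w ({f} ∪ {g}) = {x} := sing_of hx (M.hone_w w _)
  have hxfg : x ∈ ({f} ∪ {g} : Finset F) := M.hwsub w _ hx
  have hxne : x ≠ f := by
    rintro rfl
    apply hnotf
    rw [hνF]
    have : insert x ({g} : Finset F) = {x} ∪ {g} := by
      ext y; simp
    rw [this, hsing]
    exact mem_singleton_self x
  have : x = g := by
    rcases mem_union.1 hxfg with h | h
    · exact absurd (mem_singleton.1 h) hxne
    · exact mem_singleton.1 h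
  rw [hsing, this]

end StableLattice
namespace StableLattice

variable {F W : Type*} [DecidableEq F] [DecidableEq W] {M : Mkt F W}

/-- The candidate join: each firm gets its choice out of its partners in `μ` and `ν`. -/
def joinM (M : Mkt F W) (μ ν : Finset (F × W)) : Finset (F × W) :=
  (μ ∪ ν).filter fun p => p.2 ∈ M.Cf p.1 (matchedW μ p.1 ∪ matchedW ν p.1)

lemma mem_joinM {μ ν : Finset (F × W)} {f : F} {w : W} :
    (f, w) ∈ joinM M μ ν ↔
      ((f, w) ∈ μ ∪ ν ∧ w ∈ M.Cf f (matchedW μ f ∪ matchedW ν f)) := by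
  simp [joinM]

lemma joinM_matchedW {μ ν : Finset (F × W)} (f : F) :
    matchedW (joinM M μ ν) f = M.Cf f (matchedW μ f ∪ matchedW ν f) := by
  ext w
  rw [mem_matchedW, mem_joinM]
  constructor
  · exact fun h => h.2
  · intro h
    refine ⟨?_, h⟩
    have := M.hfsub f _ h
    rcases mem_union.1 this with h' | h'
    · exact mem_union_left _ (mem_matchedW.1 h')
    · exact mem_union_right _ (mem_matchedW.1 h')

lemma joinM_subset {μ ν : Finset (F × W)} : joinM M μ ν ⊆ μ ∪ ν :=
  filter_subset _ _

lemma joinM_cardW {μ ν : Finset (F × W)} (f : F) :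
    (matchedW (joinM M μ ν) f).card ≤ 1 := by
  rw [joinM_matchedW]; exact M.hone_f f _

/-- Each worker has at most one partner in the join. -/
lemma joinM_cardF {μ ν : Finset (F × W)}
    (hμ : IsStable M.Cf M.Cw μ) (hν : IsStable M.Cf M.Cw ν) (w : W) :
    (matchedF (joinM M μ ν) w).card ≤ 1 := by
  rw [Finset.card_le_one]
  intro f hf g hg
  by_contra hfg
  rw [mem_matchedF, mem_joinM] at hf hg
  obtain ⟨hf1, hf2⟩ := hf
  obtain ⟨hg1, hg2⟩ := hg
  -- helper: derive the worker-side choice facts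
  have main : ∀ f' g' : F, f' ≠ g' → (f', w) ∈ μ → (g', w) ∈ ν →
      w ∈ M.Cf f' (matchedW μ f' ∪ matchedW ν f') →
      w ∈ M.Cf g' (matchedW μ g' ∪ matchedW ν g') → False := by
    intro f' g' hne hfμ hgν hcf hcg
    have hfν : (f', w) ∉ ν := by
      intro h
      have h1 : f' ∈ matchedF ν w := mem_matchedF.2 h
      have h2 : g' ∈ matchedF ν w := mem_matchedF.2 hgν
      exact hne (Finset.card_le_one.1 (cardF hν w) f' h1 g' h2)
    have hgμ : (g', w) ∉ μ := by
      intro h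
      have h1 : g' ∈ matchedF μ w := mem_matchedF.2 h
      have h2 : f' ∈ matchedF μ w := mem_matchedF.2 hfμ
      exact hne.symm (Finset.card_le_one.1 (cardF hμ w) g' h1 f' h2)
    obtain ⟨-, hf3, hf4⟩ := key hμ hν hfμ hfν hcf
    obtain ⟨-, hg3, hg4⟩ := key hν hμ hgν hgμ (by rwa [union_comm])
    rw [union_comm] at hg4
    rw [hf4] at hg4
    exact hg3 (hg4 ▸ mem_matchedF.2 hgν)
  rcases mem_union.1 hf1 with hfμ | hfν
  · rcases mem_union.1 hg1 with hgμ | hgν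
    · exact hfg (Finset.card_le_one.1 (cardF hμ w) f
        (mem_matchedF.2 hfμ) g (mem_matchedF.2 hgμ))
    · exact main f g hfg hfμ hgν hf2 hg2
  · rcases mem_union.1 hg1 with hgμ | hgν
    · exact main g f (Ne.symm hfg) hgμ hfν hg2 hf2
    · exact hfg (Finset.card_le_one.1 (cardF hν w) f
        (mem_matchedF.2 hfν) g (mem_matchedF.2 hgν))

lemma acceptable_of_matchedW (hμ : IsStable M.Cf M.Cw μ) {f : F} {w : W}
    (h : w ∈ matchedW μ f) : M.Cf f {w} = {w} := by
  have := sing_of h (cardW hμ f)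
  rw [← this]; exact hμ.1 f

lemma acceptable_of_matchedF (hμ : IsStable M.Cf M.Cw μ) {f : F} {w : W}
    (h : f ∈ matchedF μ w) : M.Cw w {f} = {f} := by
  have := sing_of h (cardF hμ w)
  rw [← this]; exact hμ.2.1 w

lemma joinM_matchedW_nonempty {μ ν : Finset (F × W)}
    (hμ : IsStable M.Cf M.Cw μ) (hν : IsStable M.Cf M.Cw ν) (f : F) :
    (matchedW (joinM M μ ν) f).Nonempty ↔ (matchedW μ f ∪ matchedW ν f).Nonempty := by
  rw [joinM_matchedW]
  constructor
  · rintro ⟨w, hw⟩; exact ⟨w, M.hfsub f _ hw⟩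
  · rintro ⟨w, hw⟩
    rcases mem_union.1 hw with h | h
    · exact choice_ne (M.hfc f) hw (acceptable_of_matchedW hμ h)
    · exact choice_ne (M.hfc f) hw (acceptable_of_matchedW hν h)

end StableLattice
namespace StableLattice

variable {F W : Type*} [Fintype F] [Fintype W] [DecidableEq F] [DecidableEq W]
  {M : Mkt F W} {μ ν : Finset (F × W)}

lemma card_eq_fm {s : Finset (F × W)} (h : ∀ f, (matchedW s f).card ≤ 1) :
    (univ.filter fun f => (matchedW s f).Nonempty).card = s.card := by
  have himg : s.image Prod.fst = univ.filter fun f => (matchedW s f).Nonempty := by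
    ext f
    simp only [mem_image, mem_filter, mem_univ, true_and, Prod.exists]
    constructor
    · rintro ⟨a, b, hab, rfl⟩; exact ⟨b, mem_matchedW.2 hab⟩
    · rintro ⟨w, hw⟩; exact ⟨f, w, mem_matchedW.1 hw, rfl⟩
  rw [← himg]
  apply Finset.card_image_of_injOn
  intro p hp q hq hpq
  have h1 : p.2 ∈ matchedW s p.1 := mem_matchedW.2 (by simpa using hp)
  have h2 : q.2 ∈ matchedW s q.1 := mem_matchedW.2 (by simpa using hq)
  rw [← hpq] at h2
  exact Prod.ext hpq (Finset.card_le_one.1 (h p.1) _ h1 _ h2)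

lemma card_eq_wm {s : Finset (F × W)} (h : ∀ w, (matchedF s w).card ≤ 1) :
    (univ.filter fun w => (matchedF s w).Nonempty).card = s.card := by
  have himg : s.image Prod.snd = univ.filter fun w => (matchedF s w).Nonempty := by
    ext w
    simp only [mem_image, mem_filter, mem_univ, true_and, Prod.exists]
    constructor
    · rintro ⟨a, b, hab, rfl⟩; exact ⟨a, mem_matchedF.2 hab⟩
    · rintro ⟨f, hf⟩; exact ⟨f, w, mem_matchedF.1 hf, rfl⟩
  rw [← himg]
  apply Finset.card_image_of_injOn
  intro p hp q hq hpq
  have h1 : p.1 ∈ matchedF s p.2 := mem_matchedF.2 (by simpa using hp)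
  have h2 : q.1 ∈ matchedF s q.2 := mem_matchedF.2 (by simpa using hq)
  rw [← hpq] at h2
  exact Prod.ext (Finset.card_le_one.1 (h p.2) _ h1 _ h2) hpq

lemma inter_card_le (hμ : IsStable M.Cf M.Cw μ) (hν : IsStable M.Cf M.Cw ν) :
    ((univ.filter fun f => (matchedW μ f).Nonempty) ∩
      (univ.filter fun f => (matchedW ν f).Nonempty)).card ≤
    ((univ.filter fun w => (matchedF μ w).Nonempty) ∩
      (univ.filter fun w => (matchedF ν w).Nonempty)).card := by
  classical
  set J := joinM M μ ν with hJ
  set T := J.filter (fun p => (matchedW μ p.1).Nonempty ∧ (matchedW ν p.1).Nonempty)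
    with hT
  have hTsubJ : T ⊆ J := filter_subset _ _
  have hinj1 : ∀ p ∈ T, ∀ q ∈ T, p.1 = q.1 → p = q := by
    intro p hp q hq hpq
    have h1 : p.2 ∈ matchedW J p.1 := mem_matchedW.2 (hTsubJ hp)
    have h2 : q.2 ∈ matchedW J q.1 := mem_matchedW.2 (hTsubJ hq)
    rw [← hpq] at h2
    exact Prod.ext hpq (Finset.card_le_one.1 (joinM_cardW p.1) _ h1 _ h2)
  have hinj2 : ∀ p ∈ T, ∀ q ∈ T, p.2 = q.2 → p = q := by
    intro p hp q hq hpq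
    have h1 : p.1 ∈ matchedF J p.2 := mem_matchedF.2 (hTsubJ hp)
    have h2 : q.1 ∈ matchedF J q.2 := mem_matchedF.2 (hTsubJ hq)
    rw [← hpq] at h2
    exact Prod.ext (Finset.card_le_one.1 (joinM_cardF hμ hν p.2) _ h1 _ h2) hpq
  have himg1 : T.image Prod.fst =
      (univ.filter fun f => (matchedW μ f).Nonempty) ∩
        (univ.filter fun f => (matchedW ν f).Nonempty) := by
    ext f
    simp only [mem_image, mem_inter, mem_filter, mem_univ, true_and, Prod.exists]
    constructor
    · rintro ⟨a, b, hab, rfl⟩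
      exact (mem_filter.1 hab).2
    · rintro ⟨h1, h2⟩
      have hun : (matchedW μ f ∪ matchedW ν f).Nonempty := by
        obtain ⟨w, hw⟩ := h1; exact ⟨w, mem_union_left _ hw⟩
      obtain ⟨w, hw⟩ := (joinM_matchedW_nonempty hμ hν f).2 hun
      exact ⟨f, w, mem_filter.2 ⟨mem_matchedW.1 hw, h1, h2⟩, rfl⟩
  have himg2 : T.image Prod.snd ⊆
      (univ.filter fun w => (matchedF μ w).Nonempty) ∩
        (univ.filter fun w => (matchedF ν w).Nonempty) := by
    intro w hw
    obtain ⟨p, hp, rfl⟩ := mem_image.1 hw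
    obtain ⟨f, w⟩ := p
    have hpJ : (f, w) ∈ J := hTsubJ hp
    rw [hJ, mem_joinM] at hpJ
    obtain ⟨hmem, hch⟩ := hpJ
    simp only [mem_inter, mem_filter, mem_univ, true_and]
    by_cases hμm : (f, w) ∈ μ
    · by_cases hνm : (f, w) ∈ ν
      · exact ⟨⟨f, mem_matchedF.2 hμm⟩, ⟨f, mem_matchedF.2 hνm⟩⟩
      · obtain ⟨hne, -, -⟩ := key hμ hν hμm hνm hch
        exact ⟨⟨f, mem_matchedF.2 hμm⟩, hne⟩
    · have hνm : (f, w) ∈ ν := by rcases mem_union.1 hmem with h | h; exact absurd h hμm; exact h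
      obtain ⟨hne, -, -⟩ := key hν hμ hνm hμm (by rwa [union_comm])
      exact ⟨hne, ⟨f, mem_matchedF.2 hνm⟩⟩
  calc ((univ.filter fun f => (matchedW μ f).Nonempty) ∩
      (univ.filter fun f => (matchedW ν f).Nonempty)).card
      = (T.image Prod.fst).card := by rw [himg1]
    _ = T.card := Finset.card_image_of_injOn hinj1
    _ = (T.image Prod.snd).card := (Finset.card_image_of_injOn hinj2).symm
    _ ≤ _ := Finset.card_le_card himg2

lemma joinM_fm_eq (hμ : IsStable M.Cf M.Cw μ) (hν : IsStable M.Cf M.Cw ν) :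
    (univ.filter fun f => (matchedW (joinM M μ ν) f).Nonempty) =
      (univ.filter fun f => (matchedW μ f).Nonempty) ∪
        (univ.filter fun f => (matchedW ν f).Nonempty) := by
  ext f
  simp only [mem_filter, mem_union, mem_univ, true_and]
  rw [joinM_matchedW_nonempty hμ hν f]
  constructor
  · rintro ⟨w, hw⟩
    rcases mem_union.1 hw with h | h
    · exact Or.inl ⟨w, h⟩
    · exact Or.inr ⟨w, h⟩
  · rintro (⟨w, hw⟩ | ⟨w, hw⟩)
    · exact ⟨w, mem_union_left _ hw⟩
    · exact ⟨w, mem_union_right _ hw⟩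

lemma joinM_wm_eq (hμ : IsStable M.Cf M.Cw μ) (hν : IsStable M.Cf M.Cw ν) :
    (univ.filter fun w => (matchedF (joinM M μ ν) w).Nonempty) =
      (univ.filter fun w => (matchedF μ w).Nonempty) ∪
        (univ.filter fun w => (matchedF ν w).Nonempty) := by
  apply Finset.eq_of_subset_of_card_le
  · intro w hw
    simp only [mem_filter, mem_univ, true_and] at hw
    obtain ⟨f, hf⟩ := hw
    have := joinM_subset (M := M) (mem_matchedF.1 hf)
    simp only [mem_union, mem_filter, mem_univ, true_and]
    rcases mem_union.1 this with h | h
    · exact Or.inl ⟨f, mem_matchedF.2 h⟩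
    · exact Or.inr ⟨f, mem_matchedF.2 h⟩
  · have e1 : (univ.filter fun w => (matchedF (joinM M μ ν) w).Nonempty).card
        = (joinM M μ ν).card := card_eq_wm (joinM_cardF hμ hν)
    have e2 : (univ.filter fun f => (matchedW (joinM M μ ν) f).Nonempty).card
        = (joinM M μ ν).card := card_eq_fm joinM_cardW
    have e3 := joinM_fm_eq hμ hν
    have e4 : (univ.filter fun f => (matchedW μ f).Nonempty).card = μ.card :=
      card_eq_fm (cardW hμ)
    have e5 : (univ.filter fun f => (matchedW ν f).Nonempty).card = ν.card :=
      card_eq_fm (cardW hν)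
    have e6 : (univ.filter fun w => (matchedF μ w).Nonempty).card = μ.card :=
      card_eq_wm (cardF hμ)
    have e7 : (univ.filter fun w => (matchedF ν w).Nonempty).card = ν.card :=
      card_eq_wm (cardF hν)
    have e8 := Finset.card_union_add_card_inter
      (univ.filter fun f => (matchedW μ f).Nonempty)
      (univ.filter fun f => (matchedW ν f).Nonempty)
    have e9 := Finset.card_union_add_card_inter
      (univ.filter fun w => (matchedF μ w).Nonempty)
      (univ.filter fun w => (matchedF ν w).Nonempty)
    have e10 := inter_card_le hμ hν
    rw [e1]
    rw [e3] at e2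
    omega

lemma joinM_matchedF_ne (hμ : IsStable M.Cf M.Cw μ) (hν : IsStable M.Cf M.Cw ν)
    {w : W} (h : (matchedF μ w ∪ matchedF ν w).Nonempty) :
    (matchedF (joinM M μ ν) w).Nonempty := by
  have heq := joinM_wm_eq hμ hν
  have hw : w ∈ (univ.filter fun w => (matchedF μ w).Nonempty) ∪
      (univ.filter fun w => (matchedF ν w).Nonempty) := by
    obtain ⟨f, hf⟩ := h
    simp only [mem_union, mem_filter, mem_univ, true_and]
    rcases mem_union.1 hf with h' | h'
    · exact Or.inl ⟨f, h'⟩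
    · exact Or.inr ⟨f, h'⟩
  rw [← heq, mem_filter] at hw
  exact hw.2

end StableLattice
namespace StableLattice

variable {F W : Type*} [Fintype F] [Fintype W] [DecidableEq F] [DecidableEq W]
  {M : Mkt F W} {μ ν : Finset (F × W)}

lemma joinM_isStable (hμ : IsStable M.Cf M.Cw μ) (hν : IsStable M.Cf M.Cw ν) :
    IsStable M.Cf M.Cw (joinM M μ ν) := by
  refine ⟨fun f => ?_, fun w => ?_, fun f w hfw => ?_⟩
  · rw [joinM_matchedW]
    exact idemC (M.hfsub f) (M.hfc f) _
  · rcases (matchedF (joinM M μ ν) w).eq_empty_or_nonempty with he | ⟨f, hf⟩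
    · rw [he]
      exact subset_empty.1 (M.hwsub w ∅)
    · have hsing : matchedF (joinM M μ ν) w = {f} := sing_of hf (joinM_cardF hμ hν w)
      rw [hsing]
      have := joinM_subset (M := M) (mem_matchedF.1 hf)
      rcases mem_union.1 this with h | h
      · exact acceptable_of_matchedF hμ (mem_matchedF.2 h)
      · exact acceptable_of_matchedF hν (mem_matchedF.2 h)
  · rintro ⟨hwside, hfside⟩
    -- Firm side: w is chosen by f also when added to the union of partners.
    have hins : insert w (matchedW (joinM M μ ν) f) =
        M.Cf f (matchedW μ f ∪ matchedW ν f) ∪ {w} := by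
      rw [joinM_matchedW]; ext x; simp [or_comm]
    have hstep : M.Cf f (insert w (matchedW (joinM M μ ν) f)) =
        M.Cf f (insert w (matchedW μ f ∪ matchedW ν f)) := by
      rw [hins, pathInd (M.hfsub f) (M.hfs f) (M.hfc f)]
      congr 1
      ext x; simp only [mem_union, mem_insert, mem_singleton]; tauto
    rw [hstep] at hfside
    -- (f, w) is in neither μ nor ν.
    have hnotμν : (f, w) ∉ μ ∪ ν := by
      intro hmem
      apply hfw
      rw [mem_joinM]
      refine ⟨hmem, ?_⟩
      have : insert w (matchedW μ f ∪ matchedW ν f) = matchedW μ f ∪ matchedW ν f := by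
        apply insert_eq_self.2
        rcases mem_union.1 hmem with h | h
        · exact mem_union_left _ (mem_matchedW.2 h)
        · exact mem_union_right _ (mem_matchedW.2 h)
      rwa [this] at hfside
    have hnμ : (f, w) ∉ μ := fun h => hnotμν (mem_union_left _ h)
    have hnν : (f, w) ∉ ν := fun h => hnotμν (mem_union_right _ h)
    have hwμ : w ∈ M.Cf f (insert w (matchedW μ f)) := by
      have := M.hfs f _ (matchedW μ f) w
        (subset_union_left.trans (subset_insert _ _)) hfside
      exact this
    have hwν : w ∈ M.Cf f (insert w (matchedW ν f)) := by
      have := M.hfs f _ (matchedW ν f) w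
        (subset_union_right.trans (subset_insert _ _)) hfside
      exact this
    -- Worker side: case on the join partner of w.
    rcases (matchedF (joinM M μ ν) w).eq_empty_or_nonempty with he | ⟨g, hg⟩
    · -- w unmatched in join: then w unmatched in μ and ν
      have hem : matchedF μ w ∪ matchedF ν w = ∅ := by
        by_contra hne
        obtain ⟨x, hx⟩ := nonempty_iff_ne_empty.2 hne
        have := joinM_matchedF_ne hμ hν ⟨x, hx⟩
        rw [he] at this
        exact not_nonempty_empty this
      have hμw : matchedF μ w = ∅ := by
        rw [← subset_empty, ← hem]; exact subset_union_left
      rw [he] at hwside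
      rw [← hμw] at hwside
      exact hμ.2.2 f w hnμ ⟨hwside, hwμ⟩
    · have hsing : matchedF (joinM M μ ν) w = {g} := sing_of hg (joinM_cardF hμ hν w)
      have := joinM_subset (M := M) (mem_matchedF.1 hg)
      rcases mem_union.1 this with h | h
      · have : matchedF μ w = {g} := sing_of (mem_matchedF.2 h) (cardF hμ w)
        rw [hsing, ← this] at hwside
        exact hμ.2.2 f w hnμ ⟨hwside, hwμ⟩
      · have : matchedF ν w = {g} := sing_of (mem_matchedF.2 h) (cardF hν w)
        rw [hsing, ← this] at hwside
        exact hν.2.2 f w hnν ⟨hwside, hwν⟩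

lemma joinM_ge_left : FirmGE M.Cf (joinM M μ ν) μ := by
  intro f
  rw [joinM_matchedW]
  rw [pathInd (M.hfsub f) (M.hfs f) (M.hfc f)]
  congr 1
  ext x; simp only [mem_union]; tauto

lemma joinM_ge_right : FirmGE M.Cf (joinM M μ ν) ν := by
  intro f
  rw [joinM_matchedW]
  rw [pathInd (M.hfsub f) (M.hfs f) (M.hfc f)]
  congr 1
  ext x; simp only [mem_union]; tauto

lemma joinM_least {l : Finset (F × W)} (hlμ : FirmGE M.Cf l μ) (hlν : FirmGE M.Cf l ν) :
    FirmGE M.Cf l (joinM M μ ν) := by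
  intro f
  rw [joinM_matchedW]
  calc M.Cf f (matchedW l f ∪ M.Cf f (matchedW μ f ∪ matchedW ν f))
      = M.Cf f (M.Cf f (matchedW μ f ∪ matchedW ν f) ∪ matchedW l f) := by
        rw [union_comm]
    _ = M.Cf f ((matchedW μ f ∪ matchedW ν f) ∪ matchedW l f) :=
        pathInd (M.hfsub f) (M.hfs f) (M.hfc f) _ _
    _ = M.Cf f ((matchedW l f ∪ matchedW μ f) ∪ matchedW ν f) := by
        congr 1
        ext x; simp only [mem_union]; tauto
    _ = M.Cf f (M.Cf f (matchedW l f ∪ matchedW μ f) ∪ matchedW ν f) :=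
        (pathInd (M.hfsub f) (M.hfs f) (M.hfc f) _ _).symm
    _ = M.Cf f (matchedW l f ∪ matchedW ν f) := by rw [hlμ f]
    _ = matchedW l f := hlν f

lemma firmGE_antisymm {μ ν : Finset (F × W)}
    (h1 : FirmGE M.Cf μ ν) (h2 : FirmGE M.Cf ν μ) : μ = ν := by
  apply ext_matchedW
  intro f
  rw [← h1 f, union_comm, h2 f]

lemma firmGE_refl (hμ : IsStable M.Cf M.Cw μ) : FirmGE M.Cf μ μ := by
  intro f
  rw [union_self]
  exact hμ.1 f

end StableLattice
namespace StableLattice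

variable {F W : Type*} [Fintype F] [Fintype W] [DecidableEq F] [DecidableEq W]
  {M : Mkt F W} {μ ν : Finset (F × W)}

/-- Opposition of interests: if every firm weakly prefers `μ` to `ν`,
then every worker weakly prefers `ν` to `μ`. -/
lemma opposition (hμ : IsStable M.Cf M.Cw μ) (hν : IsStable M.Cf M.Cw ν)
    (h : FirmGE M.Cf μ ν) : WorkerGE M.Cw ν μ := by
  intro w
  rcases (matchedF μ w).eq_empty_or_nonempty with he | ⟨f, hf⟩
  · rw [he, union_empty]
    exact hν.2.1 w
  · by_cases hfν : (f, w) ∈ ν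
    · have h1 : matchedF μ w = {f} := sing_of hf (cardF hμ w)
      have h2 : matchedF ν w = {f} := sing_of (mem_matchedF.2 hfν) (cardF hν w)
      rw [h1, h2, union_self]
      rw [← h2]
      exact hν.2.1 w
    · have hch : w ∈ M.Cf f (matchedW μ f ∪ matchedW ν f) := by
        rw [h f]
        exact mem_matchedW.2 (mem_matchedF.1 hf)
      obtain ⟨-, -, hkey⟩ := key hμ hν (mem_matchedF.1 hf) hfν hch
      rw [union_comm]
      exact hkey

lemma opposition' (hμ : IsStable M.Cf M.Cw μ) (hν : IsStable M.Cf M.Cw ν)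
    (h : WorkerGE M.Cw μ ν) : FirmGE M.Cf ν μ := by
  have := opposition (M := M.swap) (isStable_mswap hμ) (isStable_mswap hν)
    ((firmGE_mswap (M := M)).2 h)
  exact (workerGE_mswap (M := M)).1 this

/-- The candidate meet: each worker gets its choice out of its partners. -/
def meetM (M : Mkt F W) (μ ν : Finset (F × W)) : Finset (F × W) :=
  mswap (joinM M.swap (mswap μ) (mswap ν))

lemma mswap_meetM : mswap (meetM M μ ν) = joinM M.swap (mswap μ) (mswap ν) := by
  rw [meetM, mswap_mswap]

lemma meetM_isStable (hμ : IsStable M.Cf M.Cw μ) (hν : IsStable M.Cf M.Cw ν) :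
    IsStable M.Cf M.Cw (meetM M μ ν) := by
  have h1 := joinM_isStable (M := M.swap) (isStable_mswap hμ) (isStable_mswap hν)
  have h2 := isStable_mswap (M := M.swap) h1
  exact h2

lemma meetM_matchedF (w : W) :
    matchedF (meetM M μ ν) w = M.Cw w (matchedF μ w ∪ matchedF ν w) := by
  rw [meetM, matchedF_mswap, joinM_matchedW, matchedW_mswap, matchedW_mswap]
  rfl

lemma meetM_le_left (hμ : IsStable M.Cf M.Cw μ) (hν : IsStable M.Cf M.Cw ν) :
    FirmGE M.Cf μ (meetM M μ ν) := by
  have h1 : FirmGE M.swap.Cf (mswap (meetM M μ ν)) (mswap μ) := by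
    rw [mswap_meetM]
    exact joinM_ge_left
  have h2 : WorkerGE M.Cw (meetM M μ ν) μ := (firmGE_mswap (M := M)).1 h1
  exact opposition' (meetM_isStable hμ hν) hμ h2

lemma meetM_le_right (hμ : IsStable M.Cf M.Cw μ) (hν : IsStable M.Cf M.Cw ν) :
    FirmGE M.Cf ν (meetM M μ ν) := by
  have h1 : FirmGE M.swap.Cf (mswap (meetM M μ ν)) (mswap ν) := by
    rw [mswap_meetM]
    exact joinM_ge_right
  have h2 : WorkerGE M.Cw (meetM M μ ν) ν := (firmGE_mswap (M := M)).1 h1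
  exact opposition' (meetM_isStable hμ hν) hν h2

lemma meetM_greatest (hμ : IsStable M.Cf M.Cw μ) (hν : IsStable M.Cf M.Cw ν)
    {l : Finset (F × W)} (hl : IsStable M.Cf M.Cw l)
    (hlμ : FirmGE M.Cf μ l) (hlν : FirmGE M.Cf ν l) :
    FirmGE M.Cf (meetM M μ ν) l := by
  have h1 : WorkerGE M.Cw l μ := opposition hμ hl hlμ
  have h2 : WorkerGE M.Cw l ν := opposition hν hl hlν
  have h3 : FirmGE M.swap.Cf (mswap l) (mswap (meetM M μ ν)) := by
    rw [mswap_meetM]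
    exact joinM_least (M := M.swap) ((firmGE_mswap (M := M)).2 h1)
      ((firmGE_mswap (M := M)).2 h2)
  have h4 : WorkerGE M.Cw l (meetM M μ ν) := (firmGE_mswap (M := M)).1 h3
  exact opposition' hl (meetM_isStable hμ hν) h4

lemma lub_unique {a : Finset (F × W)} (hμ : IsStable M.Cf M.Cw μ)
    (hν : IsStable M.Cf M.Cw ν) (ha : IsStableLUB M.Cf M.Cw a μ ν) :
    a = joinM M μ ν := by
  apply firmGE_antisymm (M := M)
  · exact joinM_least ha.2.1 ha.2.2.1
  · exact ha.2.2.2 _ (joinM_isStable hμ hν) joinM_ge_left joinM_ge_right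

lemma glb_unique {b : Finset (F × W)} (hμ : IsStable M.Cf M.Cw μ)
    (hν : IsStable M.Cf M.Cw ν) (hb : IsStableGLB M.Cf M.Cw b μ ν) :
    b = meetM M μ ν := by
  apply firmGE_antisymm (M := M)
  · exact hb.2.2.2 _ (meetM_isStable hμ hν) (meetM_le_left hμ hν) (meetM_le_right hμ hν)
  · exact meetM_greatest hμ hν hb.1 hb.2.1 hb.2.2.1

end StableLattice
namespace StableLattice

section Single

variable {α : Type*} [DecidableEq α]

/-- The "rejected" (worse) part of a union of two at-most-singletons. -/
def mIn (C : Finset α → Finset α) (X Y : Finset α) : Finset α :=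
  (X ∩ Y) ∪ ((X ∪ Y) \ C (X ∪ Y))

variable {C : Finset α → Finset α}

lemma mIn_comm (X Y : Finset α) : mIn C X Y = mIn C Y X := by
  rw [mIn, mIn, inter_comm, union_comm X Y]

lemma mIn_self {X : Finset α} (hX : C X = X) : mIn C X X = X := by
  simp [mIn, hX]

lemma mIn_empty_left {X : Finset α} (hX : C X = X) : mIn C ∅ X = ∅ := by
  simp [mIn, hX]

lemma mIn_empty_right {X : Finset α} (hX : C X = X) : mIn C X ∅ = ∅ := by
  simp [mIn, hX]

lemma mIn_sing {x y : α} (hxy : x ≠ y) (hch : C ({x} ∪ {y}) = {y}) :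
    mIn C {x} {y} = {x} := by
  rw [mIn, hch]
  ext a
  simp only [mem_union, mem_inter, mem_sdiff, mem_singleton]
  constructor
  · rintro (⟨rfl, h⟩ | ⟨h1 | h1, h2⟩) <;> tauto
  · rintro rfl; tauto

variable (hsub : ∀ S, C S ⊆ S) (hs : Substitutable C) (hc : Consistent C)
  (h1 : ∀ S, (C S).card ≤ 1)

include hsub hc h1 in
lemma pair_cases {x y : α} (hax : C {x} = {x}) :
    C ({x} ∪ {y}) = {x} ∨ C ({x} ∪ {y}) = {y} := by
  obtain ⟨t, ht⟩ := choice_ne hc (mem_union_left _ (mem_singleton_self x)) hax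
  have hsing := sing_of ht (h1 _)
  rcases mem_union.1 (hsub _ ht) with h | h
  · left; rw [hsing, mem_singleton.1 h]
  · right; rw [hsing, mem_singleton.1 h]

include hsub hs hc h1 in
lemma ge_trans {x y z : α} (hax : C {x} = {x})
    (hxy : C ({x} ∪ {y}) = {x}) (hyz : C ({y} ∪ {z}) = {y}) :
    C ({x} ∪ {z}) = {x} := by
  by_cases hxey : x = y
  · subst hxey; exact hyz
  by_cases hyez : y = z
  · subst hyez; exact hxy
  by_cases hxez : x = z
  · subst hxez; rw [union_self]; exact hax
  obtain ⟨t, ht⟩ := choice_ne hc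
    (mem_union_left _ (mem_singleton_self x)) hax (S := {x} ∪ ({y} ∪ {z}))
  have htm := hsub _ ht
  simp only [mem_union, mem_singleton] at htm
  rcases htm with rfl | rfl | rfl
  · -- chosen x : conclude
    have hx2 := hs ({t} ∪ ({y} ∪ {z})) {z} t
      (by intro u hu; simp only [mem_singleton] at hu; simp [hu]) ht
    rw [insert_eq] at hx2
    exact sing_of hx2 (h1 _)
  · -- chosen y : contradiction
    exfalso
    have hy2 := hs ({x} ∪ ({t} ∪ {z})) {x} t
      (by intro u hu; simp only [mem_singleton] at hu; simp [hu]) ht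
    rw [insert_eq, union_comm, hxy, mem_singleton] at hy2
    exact hxey hy2.symm
  · -- chosen z : contradiction
    exfalso
    have hz2 := hs ({x} ∪ ({y} ∪ {t})) {y} t
      (by intro u hu; simp only [mem_singleton] at hu; simp [hu]) ht
    rw [insert_eq, union_comm, hyz, mem_singleton] at hz2
    exact hyez hz2.symm

include hsub hs hc h1 in
lemma distrib_aux {A : Finset α} {b d : α} (hA : C A = A) (hcA : A.card ≤ 1)
    (hab : C {b} = {b}) (had : C {d} = {d})
    (hbd : b ≠ d) (hch : C ({b} ∪ {d}) = {d}) :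
    C (A ∪ mIn C {b} {d}) = mIn C (C (A ∪ {b})) (C (A ∪ {d})) := by
  rw [mIn_sing hbd hch]
  rcases A.eq_empty_or_nonempty with hAe | ⟨a, ha⟩
  · subst hAe
    simp only [empty_union]
    rw [hab, had, mIn_sing hbd hch]
  · have hAa : A = {a} := sing_of ha hcA
    subst hAa
    have haa : C {a} = {a} := hA
    have hRa : mIn C {a} (C ({a} ∪ {d})) = {a} := by
      rcases pair_cases hsub hc h1 (y := d) haa with hQ | hQ
      · rw [hQ, mIn_self haa]
      · rw [hQ]
        by_cases had' : a = d
        · subst had'; rw [mIn_self haa]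
        · exact mIn_sing had' hQ
    by_cases hab' : a = b
    · subst hab'
      rw [union_self, haa, hRa]
    rcases pair_cases hsub hc h1 (y := b) haa with hP | hP
    · rw [hP, hRa]
    · rw [hP]
      rcases pair_cases hsub hc h1 (y := d) haa with hQ | hQ
      · exfalso
        have hba : C ({b} ∪ {a}) = {b} := by rw [union_comm]; exact hP
        have hbd2 : C ({b} ∪ {d}) = {b} :=
          ge_trans hsub hs hc h1 hab hba hQ
        rw [hch] at hbd2
        have hdb := mem_singleton_self d
        rw [hbd2] at hdb
        exact hbd (mem_singleton.1 hdb).symm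
      · rw [hQ, mIn_sing hbd hch]

include hsub hs hc h1 in
lemma distrib_single {A B D : Finset α} (hA : C A = A) (hB : C B = B) (hD : C D = D)
    (hcA : A.card ≤ 1) (hcB : B.card ≤ 1) (hcD : D.card ≤ 1) :
    C (A ∪ mIn C B D) = mIn C (C (A ∪ B)) (C (A ∪ D)) := by
  have hidem : ∀ S, C (C S) = C S := idemC hsub hc
  rcases B.eq_empty_or_nonempty with hBe | ⟨b, hb⟩
  · subst hBe
    rw [mIn_empty_left hD, union_empty, hA]
    -- goal : A = mIn C A (C (A ∪ D))
    rcases A.eq_empty_or_nonempty with hAe | ⟨a, ha⟩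
    · subst hAe
      rw [empty_union, hD, mIn_empty_left hD]
    · have hAa : A = {a} := sing_of ha hcA
      subst hAa
      have haa : C {a} = {a} := hA
      rcases D.eq_empty_or_nonempty with hDe | ⟨d, hd⟩
      · subst hDe
        rw [union_empty, haa, mIn_self haa]
      · have hDd : D = {d} := sing_of hd hcD
        subst hDd
        rcases pair_cases hsub hc h1 (y := d) haa with hQ | hQ
        · rw [hQ, mIn_self haa]
        · rw [hQ]
          by_cases had' : a = d
          · subst had'; rw [mIn_self haa]
          · rw [mIn_sing had' hQ]
  · have hBb : B = {b} := sing_of hb hcB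
    subst hBb
    have hab : C {b} = {b} := hB
    rcases D.eq_empty_or_nonempty with hDe | ⟨d, hd⟩
    · subst hDe
      rw [mIn_empty_right hB, union_empty, hA]
      -- goal : A = mIn C (C (A ∪ {b})) A
      rcases A.eq_empty_or_nonempty with hAe | ⟨a, ha⟩
      · subst hAe
        rw [empty_union, hB, mIn_empty_right hB]
      · have hAa : A = {a} := sing_of ha hcA
        subst hAa
        have haa : C {a} = {a} := hA
        rcases pair_cases hsub hc h1 (y := b) haa with hP | hP
        · rw [hP, mIn_self haa]
        · rw [hP]
          by_cases hab' : a = b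
          · subst hab'; rw [mIn_self haa]
          · rw [mIn_comm, mIn_sing hab' hP]
    · have hDd : D = {d} := sing_of hd hcD
      subst hDd
      have had : C {d} = {d} := hD
      by_cases hbd : b = d
      · subst hbd
        rw [mIn_self hB, mIn_self (hidem _)]
      · rcases pair_cases hsub hc h1 (y := d) hab with hch | hch
        · -- b chosen over d : apply aux with roles of b, d swapped
          rw [mIn_comm, mIn_comm (C (A ∪ {b})) (C (A ∪ {d}))]
          exact distrib_aux hsub hs hc h1 hA hcA had hab (Ne.symm hbd)
            (by rwa [union_comm] at hch)
        · exact distrib_aux hsub hs hc h1 hA hcA hab had hbd hch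

end Single

end StableLattice
namespace StableLattice

variable {F W : Type*} [Fintype F] [Fintype W] [DecidableEq F] [DecidableEq W]
  {M : Mkt F W} {μ ν : Finset (F × W)}

/-- Per-worker description of the join: each worker keeps the worse of its partners. -/
lemma joinM_matchedF_eq (hμ : IsStable M.Cf M.Cw μ) (hν : IsStable M.Cf M.Cw ν)
    (w : W) :
    matchedF (joinM M μ ν) w = mIn (M.Cw w) (matchedF μ w) (matchedF ν w) := by
  have hJsub : matchedF (joinM M μ ν) w ⊆ matchedF μ w ∪ matchedF ν w := by
    intro f hf
    rw [← matchedF_union]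
    exact matchedF_subset joinM_subset hf
  rcases (matchedF μ w).eq_empty_or_nonempty with hAe | ⟨f, hfA⟩
  · rcases (matchedF ν w).eq_empty_or_nonempty with hBe | ⟨g, hgB⟩
    · rw [hAe, hBe]
      have : matchedF (joinM M μ ν) w = ∅ := by
        rw [← subset_empty]
        intro x hx
        have := hJsub hx
        rw [hAe, hBe] at this
        simpa using this
      rw [this]
      simp [mIn]
    · -- w matched in ν but not μ : impossible
      exfalso
      have hBg : matchedF ν w = {g} := sing_of hgB (cardF hν w)
      obtain ⟨x, hx⟩ := joinM_matchedF_ne hμ hν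
        (w := w) ⟨g, mem_union_right _ hgB⟩
      have hxg : x = g := by
        have := hJsub hx
        rw [hAe, hBg] at this
        simpa using this
      subst hxg
      have hxJ := mem_matchedF.1 hx
      rw [mem_joinM] at hxJ
      obtain ⟨hmem, hch⟩ := hxJ
      have hgμ : (x, w) ∉ μ := by
        intro h
        have : x ∈ matchedF μ w := mem_matchedF.2 h
        rw [hAe] at this
        simpa using this
      have hgν : (x, w) ∈ ν := by
        rcases mem_union.1 hmem with h | h
        · exact absurd h hgμ
        · exact h
      obtain ⟨hne, -, -⟩ := key hν hμ hgν hgμ (by rwa [union_comm])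
      rw [hAe] at hne
      exact not_nonempty_empty hne
  · have hAf : matchedF μ w = {f} := sing_of hfA (cardF hμ w)
    have haccf : M.Cw w {f} = {f} := acceptable_of_matchedF hμ hfA
    rcases (matchedF ν w).eq_empty_or_nonempty with hBe | ⟨g, hgB⟩
    · -- w matched in μ but not ν : impossible
      exfalso
      obtain ⟨x, hx⟩ := joinM_matchedF_ne hμ hν
        (w := w) ⟨f, mem_union_left _ hfA⟩
      have hxf : x = f := by
        have := hJsub hx
        rw [hAf, hBe] at this
        simpa using this
      subst hxf
      have hxJ := mem_matchedF.1 hx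
      rw [mem_joinM] at hxJ
      obtain ⟨hmem, hch⟩ := hxJ
      have hfν : (x, w) ∉ ν := by
        intro h
        have : x ∈ matchedF ν w := mem_matchedF.2 h
        rw [hBe] at this
        simpa using this
      obtain ⟨hne, -, -⟩ := key hμ hν (mem_matchedF.1 hfA) hfν hch
      rw [hBe] at hne
      exact not_nonempty_empty hne
    · have hBg : matchedF ν w = {g} := sing_of hgB (cardF hν w)
      rw [hAf, hBg]
      by_cases hfg : f = g
      · subst hfg
        -- both partners equal : join keeps it
        have hfJ : f ∈ matchedF (joinM M μ ν) w := by
          rw [mem_matchedF, mem_joinM]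
          refine ⟨mem_union_left _ (mem_matchedF.1 hfA), ?_⟩
          have h1 : matchedW μ f = {w} :=
            sing_of (mem_matchedW.2 (mem_matchedF.1 hfA)) (cardW hμ f)
          have h2 : matchedW ν f = {w} :=
            sing_of (mem_matchedW.2 (mem_matchedF.1 hgB)) (cardW hν f)
          rw [h1, h2, union_self, acceptable_of_matchedW hμ
            (h1 ▸ mem_singleton_self w)]
          exact mem_singleton_self w
        rw [sing_of hfJ (joinM_cardF hμ hν w), mIn_self haccf]
      · have hfν : (f, w) ∉ ν := by
          intro h
          have : f ∈ matchedF ν w := mem_matchedF.2 h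
          rw [hBg] at this
          exact hfg (mem_singleton.1 this)
        have hgμ : (g, w) ∉ μ := by
          intro h
          have : g ∈ matchedF μ w := mem_matchedF.2 h
          rw [hAf] at this
          exact hfg (mem_singleton.1 this).symm
        obtain ⟨x, hx⟩ := joinM_matchedF_ne hμ hν
          (w := w) ⟨f, mem_union_left _ hfA⟩
        have hJx : matchedF (joinM M μ ν) w = {x} := sing_of hx (joinM_cardF hμ hν w)
        have hxfg := hJsub hx
        rw [hAf, hBg] at hxfg
        have hxJ := mem_matchedF.1 hx
        rw [mem_joinM] at hxJ
        obtain ⟨hmem, hch⟩ := hxJ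
        rw [hJx]
        rcases mem_union.1 hxfg with hxf | hxg
        · -- the join keeps f; w prefers g
          have hxf' := mem_singleton.1 hxf
          subst hxf'
          obtain ⟨-, -, hkey⟩ := key hμ hν (mem_matchedF.1 hfA) hfν hch
          rw [hAf, hBg] at hkey
          rw [mIn_sing hfg hkey]
        · -- the join keeps g; w prefers f
          have hxg' := mem_singleton.1 hxg
          subst hxg'
          obtain ⟨-, -, hkey⟩ := key hν hμ (mem_matchedF.1 hgB) hgμ
            (by rwa [union_comm])
          rw [hAf, hBg] at hkey
          rw [mIn_comm, mIn_sing (Ne.symm hfg) hkey]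

end StableLattice
/-- **Distributivity of the one-to-one stable matching lattice.**
In a one-to-one market with substitutable and consistent choice functions,
`μ₁ ⊓ (μ₂ ⊔ μ₃) = (μ₁ ⊓ μ₂) ⊔ (μ₁ ⊓ μ₃)` in the stable matching lattice. -/
theorem one_to_one_stable_matching_lattice_distributive
    {F W : Type*} [Fintype F] [Fintype W] [DecidableEq F] [DecidableEq W]
    (Cf : F → Finset W → Finset W) (Cw : W → Finset F → Finset F)
    (hfsub : ∀ f S, Cf f S ⊆ S) (hwsub : ∀ w S, Cw w S ⊆ S)
    (hfs : ∀ f, Substitutable (Cf f)) (hfc : ∀ f, Consistent (Cf f))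
    (hws : ∀ w, Substitutable (Cw w)) (hwc : ∀ w, Consistent (Cw w))
    (hone_f : ∀ f T, (Cf f T).card ≤ 1) (hone_w : ∀ w T, (Cw w T).card ≤ 1)
    (μ₁ μ₂ μ₃ a b c d e : Finset (F × W))
    (h₁ : IsStable Cf Cw μ₁) (h₂ : IsStable Cf Cw μ₂) (h₃ : IsStable Cf Cw μ₃)
    (ha : IsStableLUB Cf Cw a μ₂ μ₃)
    (hb : IsStableGLB Cf Cw b μ₁ a)
    (hc : IsStableGLB Cf Cw c μ₁ μ₂)
    (hd : IsStableGLB Cf Cw d μ₁ μ₃)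
    (he : IsStableLUB Cf Cw e c d) :
    b = e := by
  classical
  set M : StableLattice.Mkt F W :=
    ⟨Cf, Cw, hfsub, hwsub, hfs, hfc, hws, hwc, hone_f, hone_w⟩ with hM
  have h₁' : IsStable M.Cf M.Cw μ₁ := h₁
  have h₂' : IsStable M.Cf M.Cw μ₂ := h₂
  have h₃' : IsStable M.Cf M.Cw μ₃ := h₃
  have haeq : a = StableLattice.joinM M μ₂ μ₃ :=
    StableLattice.lub_unique h₂' h₃' ha
  have hastable : IsStable M.Cf M.Cw a := ha.1
  have hbeq : b = StableLattice.meetM M μ₁ a :=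
    StableLattice.glb_unique h₁' hastable hb
  have hceq : c = StableLattice.meetM M μ₁ μ₂ :=
    StableLattice.glb_unique h₁' h₂' hc
  have hdeq : d = StableLattice.meetM M μ₁ μ₃ :=
    StableLattice.glb_unique h₁' h₃' hd
  have heeq : e = StableLattice.joinM M c d :=
    StableLattice.lub_unique hc.1 hd.1 he
  apply StableLattice.ext_matchedF
  intro w
  rw [hbeq, heeq]
  rw [StableLattice.meetM_matchedF, StableLattice.joinM_matchedF_eq hc.1 hd.1]
  rw [haeq, StableLattice.joinM_matchedF_eq h₂' h₃']
  rw [hceq, hdeq, StableLattice.meetM_matchedF, StableLattice.meetM_matchedF]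
  exact StableLattice.distrib_single (M.hwsub w) (M.hws w) (M.hwc w) (M.hone_w w)
    (h₁'.2.1 w) (h₂'.2.1 w) (h₃'.2.1 w)
    (StableLattice.cardF h₁' w) (StableLattice.cardF h₂' w) (StableLattice.cardF h₃' w)
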